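/- arXiv:1307.3062 — 2 statements merged into one kernel-verified Lean document; each statement's English description precedes it below -/
import Mathlib

section
/- For n ≥ 0, Σ_{m=0}^{n} C(n+1,m) (-1)^{n-m} T_m^{(r,k)}(λ) = Σ_{l=0}^{n} Σ_{m=0}^{l} (-1)^{l-m} C(l,m) C(n+1,l+1) B_m^{(k-1)} H_{n-l}^{(r)}(λ). -/
open PowerSeries Finset

/-- e^{xt} as a formal power series. -/
noncomputable def expX (x : ℂ) : PowerSeries ℂ := rescale x (exp ℂ)

/-- 1 - e^{-t} as a formal power series. -/
noncomputable def oneSubExpNeg : PowerSeries ℂ := 1 - rescale (-1) (exp ℂ)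

/-- Li_k(1-e^{-t}) = Σ_{m≥1} (1-e^{-t})^m / m^k as a formal power series. -/
noncomputable def polyLogC (k : ℤ) : PowerSeries ℂ :=
  mk fun n => ∑ m ∈ Finset.Icc 1 n, (coeff n (oneSubExpNeg ^ m)) * ((m : ℂ) ^ k)⁻¹

/-- integer power of a power series (inverse via `PowerSeries.inv`). -/
noncomputable def zpowS (f : PowerSeries ℂ) (r : ℤ) : PowerSeries ℂ :=
  f ^ r.toNat * (f⁻¹) ^ (-r).toNat

/-- (1-λ)/(e^t-λ). -/
noncomputable def feBase (l : ℂ) : PowerSeries ℂ :=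
  C (1 - l) * (exp ℂ - C l)⁻¹

/-- exponential generating function Σ f(n) t^n/n!. -/
noncomputable def GF (f : ℕ → ℂ) : PowerSeries ℂ := mk fun n => f n / n.factorial

/-- Stirling numbers of the second kind: (e^t-1)^m = m! Σ_l S2(l,m) t^l/l!. -/
noncomputable def S2 (n m : ℕ) : ℂ :=
  (n.factorial : ℂ) / (m.factorial : ℂ) * coeff n ((exp ℂ - 1) ^ m)

/- ### Auxiliary lemmas -/

lemma coeff_oneSubExpNeg (n : ℕ) : coeff n oneSubExpNeg
    = (if n = 0 then 1 else 0) - (-1) ^ n / n.factorial := by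
  simp [oneSubExpNeg, coeff_rescale, coeff_exp, coeff_one, algebraMap]
  ring

lemma constX : constantCoeff oneSubExpNeg = 0 := by
  have : constantCoeff ((rescale (-1)) (exp ℂ)) = coeff 0 ((rescale (-1)) (exp ℂ)) :=
    (coeff_zero_eq_constantCoeff_apply _).symm
  simp [oneSubExpNeg, this, coeff_rescale, coeff_exp]

lemma coeff_pow_x {n m : ℕ} (h : n < m) : coeff n (oneSubExpNeg ^ m) = 0 := by
  have hd : (X : PowerSeries ℂ) ^ m ∣ oneSubExpNeg ^ m :=
    pow_dvd_pow_of_dvd (X_dvd_iff.mpr constX) m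
  exact (X_pow_dvd_iff.mp hd) n h

/-- truncated polylog series -/
noncomputable def SS' (j : ℤ) (N : ℕ) : PowerSeries ℂ :=
  ∑ m ∈ Finset.Icc 1 N, (((m:ℂ)^j)⁻¹) • oneSubExpNeg ^ m

lemma coeff_SS (j : ℤ) (N n : ℕ) : coeff n (SS' j N)
    = ∑ m ∈ Finset.Icc 1 N, (coeff n (oneSubExpNeg ^ m)) * ((m : ℂ) ^ j)⁻¹ := by
  simp [SS', mul_comm]

lemma coeff_polyLogC_trunc (j : ℤ) {N n : ℕ} (h : n ≤ N) :
    coeff n (polyLogC j) = coeff n (SS' j N) := by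
  rw [coeff_SS]
  simp only [polyLogC, coeff_mk]
  rw [← Finset.sum_subset (Finset.Icc_subset_Icc_right h)]
  intro m hm hnm
  simp only [Finset.mem_Icc, not_and, not_le] at hnm hm
  rw [coeff_pow_x (hnm hm.1), zero_mul]

lemma deriv_x : d⁄dX ℂ oneSubExpNeg = rescale (-1) (exp ℂ) := by
  ext n
  rw [coeff_derivative]
  have hf : ((n+1).factorial : ℂ) = (n+1) * n.factorial := by
    rw [Nat.factorial_succ]; push_cast; ring
  have h0 : ((n).factorial : ℂ) ≠ 0 := Nat.cast_ne_zero.mpr n.factorial_ne_zero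
  have h1 : ((n:ℂ)+1) ≠ 0 := Nat.cast_add_one_ne_zero n
  simp only [oneSubExpNeg, map_sub, coeff_rescale, coeff_exp, coeff_one,
    Nat.add_eq_zero, one_ne_zero, and_false, if_false, map_div₀, map_one, map_natCast]
  rw [hf]
  field_simp
  ring

lemma x_mul_deriv_SS (j : ℤ) (N : ℕ) :
    oneSubExpNeg * d⁄dX ℂ (SS' j N) = (d⁄dX ℂ oneSubExpNeg) * SS' (j-1) N := by
  unfold SS'
  rw [map_sum, Finset.mul_sum, Finset.mul_sum]
  apply Finset.sum_congr rfl
  intro m hm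
  simp only [Finset.mem_Icc] at hm
  have hm1 : 1 ≤ m := hm.1
  have hmne : (m : ℂ) ≠ 0 := Nat.cast_ne_zero.mpr (by omega)
  rw [Derivation.map_smul, Derivation.leibniz_pow]
  have hxp : oneSubExpNeg * oneSubExpNeg ^ (m - 1) = oneSubExpNeg ^ m := by
    rw [← pow_succ']
    congr 1
    omega
  have hc : ((m : ℂ) ^ (j - 1))⁻¹ = ((m : ℂ) ^ j)⁻¹ * m := by
    rw [zpow_sub_one₀ hmne]
    field_simp
  rw [hc]
  rw [smul_eq_mul, nsmul_eq_mul, PowerSeries.smul_eq_C_mul, PowerSeries.smul_eq_C_mul,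
    map_mul, map_natCast]
  rw [← hxp]
  ring

lemma key_deriv (j : ℤ) :
    oneSubExpNeg * d⁄dX ℂ (polyLogC j) = rescale (-1) (exp ℂ) * polyLogC (j-1) := by
  rw [← deriv_x]
  ext n
  have h1 : coeff n (oneSubExpNeg * d⁄dX ℂ (polyLogC j))
      = coeff n (oneSubExpNeg * d⁄dX ℂ (SS' j (n+1))) := by
    rw [coeff_mul, coeff_mul]
    apply Finset.sum_congr rfl
    intro p hp
    rw [Finset.HasAntidiagonal.mem_antidiagonal] at hp
    rw [coeff_derivative, coeff_derivative,
      coeff_polyLogC_trunc j (show p.2+1 ≤ n+1 by omega)]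
  have h2 : coeff n ((d⁄dX ℂ oneSubExpNeg) * polyLogC (j-1))
      = coeff n ((d⁄dX ℂ oneSubExpNeg) * SS' (j-1) (n+1)) := by
    rw [coeff_mul, coeff_mul]
    apply Finset.sum_congr rfl
    intro p hp
    rw [Finset.HasAntidiagonal.mem_antidiagonal] at hp
    rw [coeff_polyLogC_trunc (j-1) (show p.2 ≤ n+1 by omega)]
  rw [h1, h2, x_mul_deriv_SS]

lemma coeff_GF (f : ℕ → ℂ) (n : ℕ) : coeff n (GF f) = f n / n.factorial := by
  simp [GF]

lemma coeff_zero_polyLogC (j : ℤ) : coeff 0 (polyLogC j) = 0 := by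
  simp [polyLogC]

theorem stmt9 (lam : ℂ) (hlam : lam ≠ 1) (r k : ℤ) (Tn Bn Hn : ℕ → ℂ)
    (hTn : oneSubExpNeg * GF Tn = zpowS (feBase lam) r * polyLogC k)
    (hBn : oneSubExpNeg * GF Bn = polyLogC (k - 1))
    (hHn : GF Hn = zpowS (feBase lam) r) :
    ∀ n : ℕ,
      ∑ m ∈ range (n + 1), ((n + 1).choose m : ℂ) * (-1 : ℂ) ^ (n - m) * Tn m
      = ∑ l ∈ range (n + 1), ∑ m ∈ range (l + 1),
          (-1 : ℂ) ^ (l - m) * (l.choose m : ℂ) * ((n + 1).choose (l + 1) : ℂ) * Bn m * Hn (n - l) := by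
  intro n
  have hfac : ∀ j : ℕ, ((j.factorial : ℂ)) ≠ 0 :=
    fun j => Nat.cast_ne_zero.mpr j.factorial_ne_zero
  have hx0 : oneSubExpNeg ≠ 0 := by
    intro h
    have h1 := coeff_oneSubExpNeg 1
    rw [h] at h1
    simp at h1
  have hD : d⁄dX ℂ (polyLogC k) = rescale (-1) (exp ℂ) * GF Bn := by
    have hk := key_deriv k
    rw [← hBn, show rescale (-1) (exp ℂ) * (oneSubExpNeg * GF Bn)
        = oneSubExpNeg * (rescale (-1) (exp ℂ) * GF Bn) by ring] at hk
    exact mul_left_cancel₀ hx0 hk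
  have hXT : oneSubExpNeg * GF Tn = GF Hn * polyLogC k := by rw [hTn, hHn]
  -- LHS
  have hL : ∑ m ∈ range (n + 1), ((n + 1).choose m : ℂ) * (-1 : ℂ) ^ (n - m) * Tn m
      = (n+1).factorial * coeff (n+1) (oneSubExpNeg * GF Tn) := by
    rw [mul_comm oneSubExpNeg, coeff_mul,
      Finset.Nat.sum_antidiagonal_eq_sum_range_succ_mk]
    conv_rhs => rw [Finset.sum_range_succ]
    have hz : coeff (n+1-(n+1)) oneSubExpNeg = 0 := by
      simpa using constX
    rw [hz, mul_zero, add_zero, Finset.mul_sum]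
    apply Finset.sum_congr rfl
    intro m hm
    rw [Finset.mem_range] at hm
    have hmn : m ≤ n := by omega
    rw [coeff_GF, coeff_oneSubExpNeg, if_neg (by omega),
      show n + 1 - m = (n - m) + 1 by omega,
      Nat.cast_choose ℂ (show m ≤ n+1 by omega),
      show n + 1 - m = (n - m) + 1 by omega, pow_succ,
      Nat.factorial_succ]
    have h1 := hfac m
    have h2 := hfac (n - m)
    have h3 : ((n - m : ℕ) : ℂ) + 1 ≠ 0 := Nat.cast_add_one_ne_zero _
    push_cast
    field_simp
    ring
  -- RHS
  have hR : ∑ l ∈ range (n + 1), ∑ m ∈ range (l + 1),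
        (-1 : ℂ) ^ (l - m) * (l.choose m : ℂ) * ((n + 1).choose (l + 1) : ℂ) * Bn m * Hn (n - l)
      = (n+1).factorial * coeff (n+1) (GF Hn * polyLogC k) := by
    rw [mul_comm (GF Hn), coeff_mul,
      Finset.Nat.sum_antidiagonal_eq_sum_range_succ_mk]
    conv_rhs => rw [Finset.sum_range_succ']
    rw [coeff_zero_polyLogC, zero_mul, add_zero, Finset.mul_sum]
    apply Finset.sum_congr rfl
    intro l hl
    rw [Finset.mem_range] at hl
    have hln : l ≤ n := by omega
    -- coefficient of polyLogC at l+1 from the derivative identity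
    have hc : coeff (l+1) (polyLogC k) * (l+1)
        = ∑ m ∈ range (l + 1), Bn m / m.factorial * ((-1:ℂ)^(l-m) / (l-m).factorial) := by
      have := congrArg (coeff l) hD
      rw [coeff_derivative] at this
      rw [this, mul_comm (rescale (-1) (exp ℂ)), coeff_mul,
        Finset.Nat.sum_antidiagonal_eq_sum_range_succ_mk]
      apply Finset.sum_congr rfl
      intro m hm
      rw [Finset.mem_range] at hm
      rw [coeff_GF, coeff_rescale, coeff_exp]
      simp only [map_div₀, map_one, map_natCast]
      ring
    have hcv : coeff (l+1) (polyLogC k)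
        = (∑ m ∈ range (l + 1), Bn m / m.factorial * ((-1:ℂ)^(l-m) / (l-m).factorial))
          / (l+1) := by
      rw [← hc, mul_div_cancel_right₀ _ (Nat.cast_add_one_ne_zero l)]
    rw [show n + 1 - (l + 1) = n - l by omega, hcv, Finset.sum_div, Finset.sum_mul,
      Finset.mul_sum]
    apply Finset.sum_congr rfl
    intro m hm
    rw [Finset.mem_range] at hm
    have hml : m ≤ l := by omega
    rw [coeff_GF, Nat.cast_choose ℂ hml,
      Nat.cast_choose ℂ (show l+1 ≤ n+1 by omega),
      show n + 1 - (l + 1) = n - l by omega]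
    have hlf : (((l+1).factorial : ℕ) : ℂ) = ((l:ℂ)+1) * l.factorial := by
      rw [Nat.factorial_succ]; push_cast; ring
    rw [hlf]
    have h1 := hfac m
    have h2 := hfac (l - m)
    have h3 := hfac l
    have h4 := hfac (n - l)
    have h5 : ((l:ℂ) + 1) ≠ 0 := Nat.cast_add_one_ne_zero _
    have h6 := hfac (n+1)
    push_cast
    field_simp
  rw [hL, hXT, ← hR]
end

section
/- For n ≥ 0, T_n^{(r,k)}(x|λ) = Σ_{m=0}^{n} [Σ_{l=0}^{n-m} (-1)^l C(n,l+m) S₂(l+m,m) T_{n-m-l}^{(r,k)}(λ)] x^{[m]}, where x^{[m]} = x(x+1)···(x+m-1) is the rising factorial. -/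
open PowerSeries Finset

/-! ### Auxiliary lemmas -/

lemma d_exp' : d⁄dX ℂ (exp ℂ) = exp ℂ := by
  ext n
  rw [coeff_derivative, coeff_exp, coeff_exp]
  have h1 : ((n.factorial : ℂ)) ≠ 0 := Nat.cast_ne_zero.mpr n.factorial_ne_zero
  have h2 : ((n : ℂ) + 1) ≠ 0 := Nat.cast_add_one_ne_zero n
  rw [Nat.factorial_succ]
  push_cast
  field_simp

lemma d_pow' (m : ℕ) : d⁄dX ℂ ((exp ℂ - 1) ^ (m + 1))
    = C (m + 1 : ℂ) * ((exp ℂ - 1) ^ (m + 1) + (exp ℂ - 1) ^ m) := by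
  rw [Derivation.leibniz_pow]
  rw [map_sub, d_exp', Derivation.map_one_eq_zero]
  have he : exp ℂ = (exp ℂ - 1) + 1 := by ring
  rw [sub_zero, Nat.succ_sub_one, he]
  simp only [nsmul_eq_mul, smul_eq_mul, map_add, map_one, map_natCast]
  push_cast
  ring

lemma coeff_rec' (n m : ℕ) :
    (n + 1 : ℂ) * coeff (n + 1) ((exp ℂ - 1) ^ (m + 1))
      = (m + 1 : ℂ) * (coeff n ((exp ℂ - 1) ^ (m + 1)) + coeff n ((exp ℂ - 1) ^ m)) := by
  have h := congrArg (coeff n) (d_pow' m)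
  rw [coeff_derivative, coeff_C_mul, map_add] at h
  rw [mul_comm] at h
  exact h

lemma S2_zero_of_lt' {n m : ℕ} (h : n < m) : S2 n m = 0 := by
  have hx : (X : PowerSeries ℂ) ^ m ∣ (exp ℂ - 1) ^ m := by
    apply pow_dvd_pow_of_dvd
    rw [X_dvd_iff]; simp
  obtain ⟨g, hg⟩ := hx
  rw [S2, hg, coeff_X_pow_mul']
  simp [Nat.not_le.mpr h]

lemma S2_succ_zero' (n : ℕ) : S2 (n + 1) 0 = 0 := by
  simp [S2, coeff_one]

lemma S2_zero_zero' : S2 0 0 = 1 := by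
  simp [S2]

lemma S2_rec' (n m : ℕ) : S2 (n + 1) (m + 1) = (m + 1 : ℂ) * S2 n (m + 1) + S2 n m := by
  have h := coeff_rec' n m
  have hn1 : ((n : ℂ) + 1) ≠ 0 := Nat.cast_add_one_ne_zero n
  have hm1 : ((m : ℂ) + 1) ≠ 0 := Nat.cast_add_one_ne_zero m
  have hnf : ((n.factorial : ℂ)) ≠ 0 := Nat.cast_ne_zero.mpr n.factorial_ne_zero
  have hmf : ((m.factorial : ℂ)) ≠ 0 := Nat.cast_ne_zero.mpr m.factorial_ne_zero
  simp only [S2, Nat.factorial_succ]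
  push_cast
  have hx : ((m : ℂ) + 1) * ↑m.factorial ≠ 0 := mul_ne_zero hm1 hmf
  linear_combination (norm := (field_simp; ring)) (↑n.factorial / (((m : ℂ) + 1) * ↑m.factorial)) * h

lemma stirling_expand' (n : ℕ) (x : ℂ) :
    x ^ n = ∑ m ∈ range (n + 1), (-1 : ℂ) ^ (n + m) * S2 n m * ∏ i ∈ range m, (x + i) := by
  induction n with
  | zero => simp [S2_zero_zero']
  | succ n ih =>
    have hP : ∀ m : ℕ, x * ∏ i ∈ range m, (x + (i : ℂ))
        = (∏ i ∈ range (m + 1), (x + (i : ℂ))) - (m : ℂ) * ∏ i ∈ range m, (x + (i : ℂ)) := by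
      intro m; rw [prod_range_succ]; ring
    have h1 : x ^ (n + 1) = ∑ m ∈ range (n + 1),
        ((-1 : ℂ) ^ (n + m) * S2 n m * ∏ i ∈ range (m + 1), (x + (i : ℂ))
          - (-1 : ℂ) ^ (n + m) * S2 n m * ((m : ℂ) * ∏ i ∈ range m, (x + (i : ℂ)))) := by
      calc x ^ (n + 1) = x * x ^ n := by ring
        _ = ∑ m ∈ range (n + 1),
              (-1 : ℂ) ^ (n + m) * S2 n m * (x * ∏ i ∈ range m, (x + (i : ℂ))) := by
            rw [ih, Finset.mul_sum]; exact sum_congr rfl fun m _ => by ring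
        _ = _ := sum_congr rfl fun m _ => by rw [hP]; ring
    rw [h1, sum_sub_distrib]
    have h2 : ∑ m ∈ range (n + 1),
          (-1 : ℂ) ^ (n + m) * S2 n m * ((m : ℂ) * ∏ i ∈ range m, (x + (i : ℂ)))
        = ∑ m ∈ range (n + 1),
          (-((-1 : ℂ) ^ (n + m) * ((m : ℂ) + 1) * S2 n (m + 1) * ∏ i ∈ range (m + 1), (x + (i : ℂ)))) := by
      rw [Finset.sum_range_succ' _ n, Finset.sum_range_succ]
      simp only [Nat.cast_zero, mul_zero, zero_mul, add_zero, S2_zero_of_lt' (Nat.lt_succ_self n),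
        mul_zero, zero_mul, neg_zero]
      push_cast
      exact sum_congr rfl fun m _ => by ring
    rw [h2]
    rw [Finset.sum_range_succ' _ (n + 1)]
    simp only [S2_succ_zero', mul_zero, zero_mul, add_zero, range_zero, prod_empty, mul_one]
    rw [← sum_sub_distrib]
    refine sum_congr rfl fun m _ => ?_
    rw [S2_rec']
    push_cast
    ring

lemma oneSubExpNeg_ne_zero' : oneSubExpNeg ≠ 0 := by
  intro h
  have := congrArg (coeff 1) h
  rw [oneSubExpNeg] at this
  simp [coeff_rescale, coeff_exp] at this

lemma expX_zero' : expX 0 = 1 := by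
  rw [expX, rescale_zero]
  simp

lemma hbin' (T : ℕ → ℂ → ℂ) (x : ℂ)
    (hGF : GF (fun n => T n x) = GF (fun n => T n 0) * expX x) (n : ℕ) :
    T n x = ∑ j ∈ range (n + 1), (n.choose j : ℂ) * T j 0 * x ^ (n - j) := by
  have hc := congrArg (coeff n) hGF
  rw [coeff_mul, Finset.Nat.sum_antidiagonal_eq_sum_range_succ_mk] at hc
  simp only [GF, coeff_mk, expX, coeff_rescale, coeff_exp, map_div₀, map_one, map_natCast] at hc
  have hnf : ((n.factorial : ℂ)) ≠ 0 := Nat.cast_ne_zero.mpr n.factorial_ne_zero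
  have : T n x = (n.factorial : ℂ) * ∑ j ∈ range (n + 1),
      T j 0 / j.factorial * (x ^ (n - j) * (1 / ((n - j).factorial : ℂ))) := by
    rw [← hc]; field_simp
  rw [this, Finset.mul_sum]
  refine sum_congr rfl fun j hj => ?_
  have hjn : j ≤ n := Nat.lt_succ_iff.mp (mem_range.mp hj)
  rw [Nat.cast_choose ℂ hjn]
  have h1 : ((j.factorial : ℂ)) ≠ 0 := Nat.cast_ne_zero.mpr j.factorial_ne_zero
  have h2 : (((n - j).factorial : ℂ)) ≠ 0 := Nat.cast_ne_zero.mpr (n - j).factorial_ne_zero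
  field_simp

lemma inner_eq' (n m : ℕ) (hm : m ≤ n) (T0 : ℕ → ℂ) :
    ∑ j ∈ range (n + 1), (n.choose j : ℂ) * T0 j * ((-1 : ℂ) ^ ((n - j) + m) * S2 (n - j) m)
      = ∑ l ∈ range (n - m + 1),
          (-1 : ℂ) ^ l * (n.choose (l + m) : ℂ) * S2 (l + m) m * T0 (n - m - l) := by
  have hsub : range (n - m + 1) ⊆ range (n + 1) :=
    range_subset_range.mpr (by omega)
  rw [← Finset.sum_subset hsub (by
    intro j hj hj2
    have h1 : j ≤ n := Nat.lt_succ_iff.mp (mem_range.mp hj)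
    have h2 : n - m < j := by
      by_contra hc
      exact hj2 (mem_range.mpr (by omega))
    have : n - j < m := by omega
    rw [S2_zero_of_lt' this]
    ring)]
  rw [← Finset.sum_range_reflect]
  refine sum_congr rfl fun l hl => ?_
  have hl' : l ≤ n - m := by
    have := mem_range.mp hl; omega
  have e1 : n - m + 1 - 1 - l = n - m - l := by omega
  rw [e1]
  have e2 : n - (n - m - l) = m + l := by omega
  rw [e2]
  have e3 : n.choose (n - m - l) = n.choose (l + m) := by
    have : n - m - l = n - (l + m) := by omega
    rw [this, Nat.choose_symm (by omega)]
  rw [e3]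
  have e4 : (-1 : ℂ) ^ (m + l + m) = (-1 : ℂ) ^ l := by
    have : m + l + m = l + 2 * m := by omega
    rw [this, pow_add, pow_mul, neg_one_sq, one_pow, mul_one]
  rw [e4]
  have e5 : m + l = l + m := by omega
  rw [e5]
  ring

theorem stmt14 (lam : ℂ) (hlam : lam ≠ 1) (r k : ℤ) (T : ℕ → ℂ → ℂ)
    (hT : ∀ x : ℂ, oneSubExpNeg * GF (fun n => T n x)
        = zpowS (feBase lam) (r) * polyLogC (k) * expX x) :
    ∀ (n : ℕ) (x : ℂ),
      T n x = ∑ m ∈ range (n + 1),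
        (∑ l ∈ range (n - m + 1),
          (-1 : ℂ) ^ l * (n.choose (l + m) : ℂ) * S2 (l + m) m * T (n - m - l) 0) *
        ∏ i ∈ range m, (x + i) := by
  intro n x
  -- Step 1: GF (T · x) = GF (T · 0) * expX x
  have hGF : GF (fun n => T n x) = GF (fun n => T n 0) * expX x := by
    have h0 := hT 0
    rw [expX_zero', mul_one] at h0
    have hx := hT x
    rw [← h0] at hx
    rw [mul_assoc] at hx
    exact mul_left_cancel₀ oneSubExpNeg_ne_zero' hx
  -- Step 2: binomial expansion
  rw [hbin' T x hGF n]
  -- Step 3: expand powers of x by Stirling identity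
  have step3 : ∀ j ∈ range (n + 1),
      (n.choose j : ℂ) * T j 0 * x ^ (n - j)
        = ∑ m ∈ range (n + 1),
            (n.choose j : ℂ) * T j 0 * ((-1 : ℂ) ^ ((n - j) + m) * S2 (n - j) m)
              * ∏ i ∈ range m, (x + (i : ℂ)) := by
    intro j hj
    have hjn : j ≤ n := Nat.lt_succ_iff.mp (mem_range.mp hj)
    rw [stirling_expand' (n - j) x, Finset.mul_sum]
    have hsub : range (n - j + 1) ⊆ range (n + 1) := range_subset_range.mpr (by omega)
    rw [Finset.sum_subset hsub (by
      intro m hmem hm2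
      have h2 : n - j < m := by
        by_contra hc
        exact hm2 (mem_range.mpr (by omega))
      rw [S2_zero_of_lt' h2]
      ring)]
    exact sum_congr rfl fun m _ => by ring
  rw [sum_congr rfl step3, Finset.sum_comm]
  refine sum_congr rfl fun m hm => ?_
  have hmn : m ≤ n := Nat.lt_succ_iff.mp (mem_range.mp hm)
  rw [← Finset.sum_mul]
  rw [inner_eq' n m hmn (fun j => T j 0)]
end
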